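/- (Proposition 5.4 of the paper) Let A be a Dedekind domain and n ≥ 3. Let q, q' ∈ A be nonzero elements generating proper principal ideals 𝔮 = qA and 𝔮' = q'A that are comaximal: 𝔮 + 𝔮' = A. Let D, D' ∈ Mat_n(A) be matrices such that det D divides some power of q and det D' divides some power of q'. Suppose H is a subgroup of SL_n(A) satisfying: (a) every M ∈ SL_n(A) for which there exists N ∈ F_n(A,𝔮) with D·M = N·D belongs to H, and (b) every M ∈ SL_n(A) for which there exists N' ∈ F_n(A,𝔮') with D'·M = N'·D' belongs to H. Then H contains E_n(A). -/

import Mathlib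

/-- The set of elementary matrices `1 + a • e i j` (viewed inside `SL n A`)
with off-diagonal position `(i,j)` and entry `a` belonging to the set `S`. -/
def elemSet (n : ℕ) (A : Type*) [CommRing A] (S : Set A) :
    Set (Matrix.SpecialLinearGroup (Fin n) A) :=
  { M | ∃ i j : Fin n, i ≠ j ∧ ∃ a ∈ S,
      (M : Matrix (Fin n) (Fin n) A) = 1 + Matrix.single i j a }

/-- `E_n(A)`: the subgroup of `SL_n(A)` generated by all elementary matrices. -/
def En (n : ℕ) (A : Type*) [CommRing A] :
    Subgroup (Matrix.SpecialLinearGroup (Fin n) A) :=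
  Subgroup.closure (elemSet n A Set.univ)

/-- `F_n(A,𝔮)`: the subgroup generated by elementary matrices with entry in `𝔮`. -/
def Fn (n : ℕ) (A : Type*) [CommRing A] (q : Ideal A) :
    Subgroup (Matrix.SpecialLinearGroup (Fin n) A) :=
  Subgroup.closure (elemSet n A (q : Set A))

/-- `SL_n(A,𝔮)`: the principal congruence subgroup, i.e. the kernel of
reduction `SL_n(A) → SL_n(A/𝔮)`. -/
def SLrel (n : ℕ) (A : Type*) [CommRing A] (q : Ideal A) :
    Subgroup (Matrix.SpecialLinearGroup (Fin n) A) :=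
  (Matrix.SpecialLinearGroup.map (Ideal.Quotient.mk q)).ker

/-- `E_n(A,𝔮)`: the normal closure of `F_n(A,𝔮)` in `E_n(A)`, i.e. the subgroup
generated by all `E_n(A)`-conjugates of elements of `F_n(A,𝔮)`. -/
def EnRel (n : ℕ) (A : Type*) [CommRing A] (q : Ideal A) :
    Subgroup (Matrix.SpecialLinearGroup (Fin n) A) :=
  Subgroup.closure { M | ∃ g ∈ En n A, ∃ f ∈ Fn n A q, M = g * f * g⁻¹ }


namespace Prop54

open Matrix

variable {n : ℕ} {A : Type*} [CommRing A]

/-- Rank-one products. -/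
theorem vmv_mul (z s r t : Fin n → A) :
    vecMulVec z s * vecMulVec r t = (s ⬝ᵥ r) • vecMulVec z t := by
  ext i j
  rw [Matrix.mul_apply, Matrix.smul_apply, vecMulVec_apply, dotProduct, smul_eq_mul,
    Finset.sum_mul]
  exact Finset.sum_congr rfl fun k _ => by rw [vecMulVec_apply, vecMulVec_apply]; ring

theorem vmv_smul_left (c : A) (z t : Fin n → A) :
    vecMulVec (c • z) t = c • vecMulVec z t := by
  ext i j; simp [vecMulVec_apply, smul_eq_mul, mul_assoc]

theorem vmv_smul_right (c : A) (z t : Fin n → A) :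
    vecMulVec z (c • t) = c • vecMulVec z t := by
  ext i j; simp [vecMulVec_apply, smul_eq_mul]; ring

theorem vmv_add_left (z z' t : Fin n → A) :
    vecMulVec (z + z') t = vecMulVec z t + vecMulVec z' t := by
  ext i j; simp [vecMulVec_apply, add_mul]

theorem vmv_add_right (z t t' : Fin n → A) :
    vecMulVec z (t + t') = vecMulVec z t + vecMulVec z t' := by
  ext i j; simp [vecMulVec_apply, mul_add]

theorem vmv_zero_right (z : Fin n → A) : vecMulVec z (0 : Fin n → A) = 0 := by
  ext i j; simp [vecMulVec_apply]

theorem vmv_single_single (p m : Fin n) (a b : A) :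
    vecMulVec (Pi.single p a) (Pi.single m b) = single p m (a * b) := by
  ext i j
  rw [vecMulVec_apply]
  simp only [Pi.single_apply, Matrix.single, Matrix.of_apply]
  by_cases hi : p = i <;> by_cases hj : m = j <;>
    simp [hi, hj, eq_comm, Ne.symm]

theorem vmv_single_left (p : Fin n) (c : A) (t : Fin n → A) :
    vecMulVec (Pi.single p c) t = vecMulVec (Pi.single p 1) (c • t) := by
  ext i j
  by_cases hi : i = p <;> simp [vecMulVec_apply, hi, Pi.single_apply, smul_eq_mul] <;> ring

theorem single_smul' (p : Fin n) (c a : A) :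
    c • (Pi.single p a : Fin n → A) = Pi.single p (c * a) := by
  funext x
  by_cases hx : x = p <;> simp [hx, Pi.single_apply]

end Prop54

namespace Prop54x
open Matrix Prop54

variable {n : ℕ} {A : Type*} [CommRing A]

/-- `X` is the coercion of an element of `F_n(A,Q)`. -/
def IsF (n : ℕ) (A : Type*) [CommRing A] (Q : Ideal A) (X : Matrix (Fin n) (Fin n) A) : Prop :=
  ∃ N : Matrix.SpecialLinearGroup (Fin n) A, N ∈ Fn n A Q ∧
    (N : Matrix (Fin n) (Fin n) A) = X

theorem IsF.one (Q : Ideal A) : IsF n A Q 1 :=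
  ⟨1, Subgroup.one_mem _, rfl⟩

theorem IsF.mul {Q : Ideal A} {X Y : Matrix (Fin n) (Fin n) A}
    (hX : IsF n A Q X) (hY : IsF n A Q Y) : IsF n A Q (X * Y) := by
  obtain ⟨N1, h1, e1⟩ := hX
  obtain ⟨N2, h2, e2⟩ := hY
  exact ⟨N1 * N2, Subgroup.mul_mem _ h1 h2, by
    rw [Matrix.SpecialLinearGroup.coe_mul, e1, e2]⟩

theorem IsF.elem {Q : Ideal A} {i j : Fin n} (hij : i ≠ j) {a : A} (ha : a ∈ Q) :
    IsF n A Q (1 + single i j a) :=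
  ⟨⟨Matrix.transvection i j a, Matrix.det_transvection_of_ne i j hij a⟩,
    Subgroup.subset_closure ⟨i, j, hij, a, ha, rfl⟩, rfl⟩

theorem IsF.inv_form {Q : Ideal A} {z s : Fin n → A}
    (h : IsF n A Q (1 + vecMulVec z s)) (hsz : s ⬝ᵥ z = 0) :
    IsF n A Q (1 - vecMulVec z s) := by
  obtain ⟨N, hN, hcoe⟩ := h
  refine ⟨N⁻¹, Subgroup.inv_mem _ hN, ?_⟩
  have hPP : vecMulVec z s * vecMulVec z s = 0 := by
    rw [vmv_mul, hsz, zero_smul]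
  have h2 : (N : Matrix (Fin n) (Fin n) A) * (1 - vecMulVec z s) = 1 := by
    rw [hcoe]
    have : ((1 : Matrix (Fin n) (Fin n) A) + vecMulVec z s) * (1 - vecMulVec z s)
        = 1 - vecMulVec z s * vecMulVec z s := by noncomm_ring
    rw [this, hPP, sub_zero]
  have h3 : (N : Matrix (Fin n) (Fin n) A) * (N⁻¹ : Matrix.SpecialLinearGroup (Fin n) A) = 1 := by
    rw [← Matrix.SpecialLinearGroup.coe_mul, mul_inv_cancel,
      Matrix.SpecialLinearGroup.coe_one]
  have hb : (1 - vecMulVec z s) * (N : Matrix (Fin n) (Fin n) A) = 1 :=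
    mul_eq_one_comm.mp h2
  calc ((N⁻¹ : Matrix.SpecialLinearGroup (Fin n) A) : Matrix (Fin n) (Fin n) A)
      = ((1 - vecMulVec z s) * (N : Matrix (Fin n) (Fin n) A)) * (N⁻¹ : Matrix.SpecialLinearGroup (Fin n) A) := by
        rw [hb, one_mul]
    _ = (1 - vecMulVec z s) * ((N : Matrix (Fin n) (Fin n) A) * (N⁻¹ : Matrix.SpecialLinearGroup (Fin n) A)) := by
        rw [mul_assoc]
    _ = 1 - vecMulVec z s := by rw [h3, mul_one]

theorem IsF.add_left {Q : Ideal A} {z z' t : Fin n → A}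
    (h1 : IsF n A Q (1 + vecMulVec z t)) (h2 : IsF n A Q (1 + vecMulVec z' t))
    (h : t ⬝ᵥ z' = 0) : IsF n A Q (1 + vecMulVec (z + z') t) := by
  have hmul := h1.mul h2
  have hc : vecMulVec z t * vecMulVec z' t = 0 := by rw [vmv_mul, h, zero_smul]
  have key : ((1 : Matrix (Fin n) (Fin n) A) + vecMulVec z t) * (1 + vecMulVec z' t)
      = 1 + vecMulVec (z + z') t := by
    have : ((1 : Matrix (Fin n) (Fin n) A) + vecMulVec z t) * (1 + vecMulVec z' t)
        = 1 + (vecMulVec z t + vecMulVec z' t) + vecMulVec z t * vecMulVec z' t := by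
      noncomm_ring
    rw [this, hc, add_zero, vmv_add_left]
  rwa [key] at hmul

theorem IsF.add_right {Q : Ideal A} {z t t' : Fin n → A}
    (h1 : IsF n A Q (1 + vecMulVec z t)) (h2 : IsF n A Q (1 + vecMulVec z t'))
    (h : t ⬝ᵥ z = 0) : IsF n A Q (1 + vecMulVec z (t + t')) := by
  have hmul := h1.mul h2
  have hc : vecMulVec z t * vecMulVec z t' = 0 := by rw [vmv_mul, h, zero_smul]
  have key : ((1 : Matrix (Fin n) (Fin n) A) + vecMulVec z t) * (1 + vecMulVec z t')
      = 1 + vecMulVec z (t + t') := by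
    have : ((1 : Matrix (Fin n) (Fin n) A) + vecMulVec z t) * (1 + vecMulVec z t')
        = 1 + (vecMulVec z t + vecMulVec z t') + vecMulVec z t * vecMulVec z t' := by
      noncomm_ring
    rw [this, hc, add_zero, vmv_add_right]
  rwa [key] at hmul

end Prop54x

namespace Prop54x
open Matrix Prop54

variable {n : ℕ} {A : Type*} [CommRing A]

theorem IsF.row (Q : Ideal A) (p : Fin n) (t : Fin n → A)
    (hp : t p = 0) (hQ : ∀ k, t k ∈ Q) :
    IsF n A Q (1 + vecMulVec (Pi.single p 1) t) := by
  have key : ∀ s : Finset (Fin n),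
      IsF n A Q (1 + vecMulVec (Pi.single p 1) (fun k => if k ∈ s then t k else 0)) := by
    intro s
    induction s using Finset.induction_on with
    | empty =>
        have : (fun k : Fin n => if k ∈ (∅ : Finset (Fin n)) then t k else 0)
            = (0 : Fin n → A) := by funext k; simp
        rw [this, vmv_zero_right, add_zero]
        exact IsF.one Q
    | @insert q0 s hq0 ih =>
        have hfun : (fun k : Fin n => if k ∈ insert q0 s then t k else 0)
            = (fun k : Fin n => if k ∈ s then t k else 0) + Pi.single q0 (t q0) := by
          funext k
          by_cases hk : k = q0
          · subst hk; simp [hq0]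
          · simp [hk, Finset.mem_insert, Pi.single_apply]
        rw [hfun]
        have hdot : (fun k : Fin n => if k ∈ s then t k else 0) ⬝ᵥ Pi.single p (1 : A) = 0 := by
          rw [dotProduct_single, mul_one]
          by_cases hps : p ∈ s <;> simp [hps, hp]
        have hpiece : IsF n A Q (1 + vecMulVec (Pi.single p 1) (Pi.single q0 (t q0))) := by
          rw [vmv_single_single, one_mul]
          by_cases hpq : q0 = p
          · subst hpq; rw [hp]; simpa using IsF.one Q
          · exact IsF.elem (fun h => hpq h.symm) (hQ q0)
        exact IsF.add_right ih hpiece hdot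
  have := key Finset.univ
  simpa using this

theorem IsF.col (Q : Ideal A) (m : Fin n) (z : Fin n → A)
    (hm : z m = 0) (hQ : ∀ k, z k ∈ Q) :
    IsF n A Q (1 + vecMulVec z (Pi.single m 1)) := by
  have key : ∀ s : Finset (Fin n),
      IsF n A Q (1 + vecMulVec (fun k => if k ∈ s then z k else 0) (Pi.single m 1)) := by
    intro s
    induction s using Finset.induction_on with
    | empty =>
        have : (fun k : Fin n => if k ∈ (∅ : Finset (Fin n)) then z k else 0)
            = (0 : Fin n → A) := by funext k; simp
        rw [this]
        have : vecMulVec (0 : Fin n → A) (Pi.single m (1 : A)) = 0 := by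
          ext i j; simp [vecMulVec_apply]
        rw [this, add_zero]
        exact IsF.one Q
    | @insert q0 s hq0 ih =>
        have hfun : (fun k : Fin n => if k ∈ insert q0 s then z k else 0)
            = (fun k : Fin n => if k ∈ s then z k else 0) + Pi.single q0 (z q0) := by
          funext k
          by_cases hk : k = q0
          · subst hk; simp [hq0]
          · simp [hk, Finset.mem_insert, Pi.single_apply]
        rw [hfun]
        have hdot : (Pi.single m (1 : A)) ⬝ᵥ Pi.single q0 (z q0) = 0 := by
          rw [single_dotProduct, one_mul, Pi.single_apply]
          by_cases hqm : m = q0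
          · subst hqm; simp [hm]
          · simp [Ne.symm hqm, hqm]
        have hpiece : IsF n A Q (1 + vecMulVec (Pi.single q0 (z q0)) (Pi.single m 1)) := by
          rw [vmv_single_single, mul_one]
          by_cases hpq : q0 = m
          · subst hpq; rw [hm]; simpa using IsF.one Q
          · exact IsF.elem hpq (hQ q0)
        exact IsF.add_left ih hpiece hdot
  have := key Finset.univ
  simpa using this

/-- The commutator core: a transvection `1 + z tᵀ` with `t ⬝ z = 0`, both vanishing at a
common index `m` and with all entries in `Q`, lies in `F_n(A,Q)`. -/
theorem IsF.core (Q : Ideal A) (z t : Fin n → A) (m : Fin n)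
    (hzm : z m = 0) (htm : t m = 0) (htz : t ⬝ᵥ z = 0)
    (hzQ : ∀ k, z k ∈ Q) (htQ : ∀ k, t k ∈ Q) :
    IsF n A Q (1 + vecMulVec z t) := by
  set P := vecMulVec z (Pi.single m (1 : A)) with hP
  set R := vecMulVec (Pi.single m (1 : A)) t with hR
  have hX : IsF n A Q (1 + P) := IsF.col Q m z hzm hzQ
  have hY : IsF n A Q (1 + R) := IsF.row Q m t htm htQ
  have hXi : IsF n A Q (1 - P) := by
    refine IsF.inv_form hX ?_
    rw [single_dotProduct, one_mul, hzm]
  have hYi : IsF n A Q (1 - R) := by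
    refine IsF.inv_form hY ?_
    rw [dotProduct_single, htm, zero_mul]
  have hPP : P * P = 0 := by
    rw [hP, vmv_mul, single_dotProduct, one_mul, hzm, zero_smul]
  have hRR : R * R = 0 := by
    rw [hR, vmv_mul, dotProduct_single, htm, zero_mul, zero_smul]
  have hRP : R * P = 0 := by
    rw [hR, hP, vmv_mul, htz, zero_smul]
  have hPR : P * R = vecMulVec z t := by
    rw [hP, hR, vmv_mul, single_dotProduct, one_mul, Pi.single_eq_same, one_smul]
  have key : (1 + P) * (1 + R) * (1 - P) * (1 - R) = 1 + vecMulVec z t := by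
    have z1 : P * (P * R) = 0 := by rw [← mul_assoc, hPP, zero_mul]
    have z2 : R * (P * R) = 0 := by rw [← mul_assoc, hRP, zero_mul]
    have z3 : (P * R) * P = 0 := by rw [mul_assoc, hRP, mul_zero]
    have z4 : (P * R) * R = 0 := by rw [mul_assoc, hRR, mul_zero]
    have z5 : (P * R) * (P * R) = 0 := by rw [mul_assoc, z2, mul_zero]
    have expand : (1 + P) * (1 + R) * (1 - P) * (1 - R) =
        1 - P - R + P * R + P - P * P - P * R + P * (P * R)
          + R - R * P - R * R + R * (P * R)
          + P * R - (P * R) * P - (P * R) * R + (P * R) * (P * R) := by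
      noncomm_ring
    rw [expand, hPP, hRR, hRP, z1, z2, z3, z4, z5, hPR]
    abel
  have := ((hX.mul hY).mul hXi).mul hYi
  rwa [key] at this

end Prop54x

namespace Prop54x
open Matrix Prop54

variable {n : ℕ} {A : Type*} [CommRing A]

theorem exists_third (hn : 3 ≤ n) (k l : Fin n) : ∃ m : Fin n, m ≠ k ∧ m ≠ l := by
  by_contra h
  push_neg at h
  have hsub : (Finset.univ : Finset (Fin n)) ⊆ {k, l} := by
    intro m _
    rcases eq_or_ne m k with h' | h'
    · simp [h']
    · simp [h m h']
  have hcard := Finset.card_le_card hsub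
  have h2 : ({k, l} : Finset (Fin n)).card ≤ 2 := by
    refine (Finset.card_insert_le _ _).trans ?_
    simp
  rw [Finset.card_univ, Fintype.card_fin] at hcard
  omega

theorem IsF.transvec_pair (hn : 3 ≤ n) (Q : Ideal A) (u t : Fin n → A) (k l : Fin n)
    (hkl : k ≠ l) (hsupp : ∀ p, p ≠ k → p ≠ l → t p = 0) (htu : t ⬝ᵥ u = 0)
    (c b : A) (hc : ∀ p, c * u p ∈ Q) (hb : ∀ p, b * t p ∈ Q) :
    IsF n A Q (1 + vecMulVec ((c * b) • u) t) := by
  obtain ⟨m, hmk, hml⟩ := exists_third hn k l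
  set z0 : Fin n → A := fun p => if p = k ∨ p = l then u p else 0 with hz0
  -- dot product of t with z0 is t ⬝ᵥ u
  have hdot0 : t ⬝ᵥ z0 = 0 := by
    have : t ⬝ᵥ z0 = t ⬝ᵥ u := by
      refine Finset.sum_congr rfl fun p _ => ?_
      by_cases h1 : p = k ∨ p = l
      · simp [hz0, h1]
      · push_neg at h1
        simp [hz0, h1, hsupp p h1.1 h1.2]
    rw [this, htu]
  -- the core on support {k, l}
  have hcore : IsF n A Q (1 + vecMulVec ((c * b) • z0) t) := by
    have heq : vecMulVec ((c * b) • z0) t = vecMulVec (c • z0) (b • t) := by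
      rw [vmv_smul_left, vmv_smul_left, vmv_smul_right, smul_smul]
    rw [heq]
    refine IsF.core Q (c • z0) (b • t) m ?_ ?_ ?_ ?_ ?_
    · simp [hz0, Pi.smul_apply, hmk, hml]
    · simp [Pi.smul_apply, hsupp m hmk hml]
    · rw [show (b • t) ⬝ᵥ (c • z0) = (b * c) • (t ⬝ᵥ z0) by
        rw [smul_dotProduct, dotProduct_smul, smul_smul]]
      rw [hdot0, smul_zero]
    · intro p
      by_cases h1 : p = k ∨ p = l
      · simpa [hz0, h1, Pi.smul_apply, smul_eq_mul] using hc p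
      · simp [hz0, h1, Pi.smul_apply]
    · intro p
      simpa [Pi.smul_apply, smul_eq_mul] using hb p
  -- fold in the other coordinates
  have key : ∀ s : Finset (Fin n),
      IsF n A Q (1 + vecMulVec ((c * b) •
        (fun p => if p = k ∨ p = l ∨ p ∈ s then u p else 0)) t) := by
    intro s
    induction s using Finset.induction_on with
    | empty =>
        have : (fun p : Fin n => if p = k ∨ p = l ∨ p ∈ (∅ : Finset (Fin n)) then u p else 0)
            = z0 := by
          funext p; simp [hz0]
        rw [this]; exact hcore
    | @insert p0 s hp0 ih =>
        by_cases hp0kl : p0 = k ∨ p0 = l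
        · have : (fun p : Fin n => if p = k ∨ p = l ∨ p ∈ insert p0 s then u p else 0)
              = (fun p : Fin n => if p = k ∨ p = l ∨ p ∈ s then u p else 0) := by
            funext p
            by_cases hpp : p = p0
            · subst hpp
              simp only [Finset.mem_insert]
              rcases hp0kl with h | h <;> simp [h]
            · simp [Finset.mem_insert, hpp]
          rw [this]; exact ih
        · push_neg at hp0kl
          have hfun : ((c * b) • (fun p : Fin n => if p = k ∨ p = l ∨ p ∈ insert p0 s then u p else 0))
              = ((c * b) • (fun p : Fin n => if p = k ∨ p = l ∨ p ∈ s then u p else 0))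
                + Pi.single p0 ((c * b) * u p0) := by
            funext p
            by_cases hpp : p = p0
            · subst hpp
              simp [Finset.mem_insert, hp0kl.1, hp0kl.2, hp0, Pi.smul_apply, smul_eq_mul]
            · simp [Finset.mem_insert, hpp, Pi.single_apply, Pi.smul_apply]
          rw [hfun]
          have hpiece : IsF n A Q (1 + vecMulVec (Pi.single p0 ((c * b) * u p0)) t) := by
            rw [vmv_single_left]
            refine IsF.row Q p0 (((c * b) * u p0) • t) ?_ ?_
            · simp [Pi.smul_apply, hsupp p0 hp0kl.1 hp0kl.2]
            · intro x
              have : (((c * b) * u p0) • t) x = (c * u p0) * (b * t x) := by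
                simp [Pi.smul_apply, smul_eq_mul]; ring
              rw [this]
              exact Q.mul_mem_left _ (hb x)
          have hdotp : t ⬝ᵥ Pi.single p0 ((c * b) * u p0) = 0 := by
            rw [dotProduct_single, hsupp p0 hp0kl.1 hp0kl.2, zero_mul]
          exact IsF.add_left ih hpiece hdotp
  have := key Finset.univ
  have huniv : (fun p : Fin n => if p = k ∨ p = l ∨ p ∈ (Finset.univ : Finset (Fin n))
      then u p else 0) = u := by
    funext p; simp
  rwa [huniv] at this

end Prop54x

namespace Prop54x
open Matrix Prop54

variable {n : ℕ} {A : Type*} [CommRing A]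

/-- The main factorization: `1 + (q²s)·u·(d·v)ᵀ ∈ F_n(A, qA)` whenever
`w ⬝ᵥ u = d` and `v ⬝ᵥ u = 0`. -/
theorem IsF.main (hn : 3 ≤ n) (qq : A) (u v w : Fin n → A) (d s : A)
    (hwu : w ⬝ᵥ u = d) (hvu : v ⬝ᵥ u = 0) :
    IsF n A (Ideal.span {qq}) (1 + vecMulVec ((qq * qq * s) • u) (d • v)) := by
  set Q := Ideal.span ({qq} : Set A) with hQdef
  set τ : Fin n → Fin n → Fin n → A :=
    fun k l => Pi.single l (u k) - Pi.single k (u l) with hτ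
  have hτu : ∀ k l, (τ k l) ⬝ᵥ u = 0 := by
    intro k l
    rw [hτ]
    rw [sub_dotProduct, single_dotProduct, single_dotProduct]
    ring
  have hτz : ∀ k l, (τ k l) ⬝ᵥ ((qq * qq * s) • u) = 0 := by
    intro k l; rw [dotProduct_smul, hτu, smul_zero]
  have hpiece : ∀ k l : Fin n,
      IsF n A Q (1 + vecMulVec ((qq * qq * s) • u) ((w k * v l) • τ k l)) := by
    intro k l
    by_cases hkl : k = l
    · subst hkl
      have h0 : τ k k = 0 := by rw [hτ]; simp
      rw [h0, smul_zero, vmv_zero_right, add_zero]; exact IsF.one Q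
    · have heq : vecMulVec ((qq * qq * s) • u) ((w k * v l) • τ k l)
          = vecMulVec ((qq * (qq * s * (w k * v l))) • u) (τ k l) := by
        rw [vmv_smul_right, vmv_smul_left, vmv_smul_left, smul_smul]
        congr 1
        ring
      rw [heq]
      refine IsF.transvec_pair hn Q u (τ k l) k l hkl ?_ (hτu k l)
        qq (qq * s * (w k * v l)) ?_ ?_
      · intro p hpk hpl
        rw [hτ]; simp [Pi.single_apply, hpk, hpl]
      · intro p; exact Ideal.mem_span_singleton.mpr (dvd_mul_right _ _)
      · intro p
        exact Ideal.mem_span_singleton.mpr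
          (((dvd_mul_right qq s).mul_right (w k * v l)).mul_right (τ k l p))
  have key : ∀ S : Finset (Fin n × Fin n),
      IsF n A Q (1 + vecMulVec ((qq * qq * s) • u)
        (∑ x ∈ S, (w x.1 * v x.2) • τ x.1 x.2)) := by
    intro S
    induction S using Finset.induction_on with
    | empty => rw [Finset.sum_empty, vmv_zero_right, add_zero]; exact IsF.one Q
    | @insert x S hx ih =>
        rw [Finset.sum_insert hx]
        have hpd : ((w x.1 * v x.2) • τ x.1 x.2) ⬝ᵥ ((qq * qq * s) • u) = 0 := by
          rw [smul_dotProduct, hτz, smul_zero]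
        exact IsF.add_right (hpiece x.1 x.2) ih hpd
  have hmain := key Finset.univ
  have hsum : (∑ x ∈ (Finset.univ : Finset (Fin n × Fin n)), (w x.1 * v x.2) • τ x.1 x.2)
      = d • v := by
    funext e
    rw [Finset.sum_apply]
    have hτe : ∀ k l, τ k l e = (if e = l then u k else 0) - (if e = k then u l else 0) := by
      intro k l; rw [hτ]; simp [Pi.sub_apply, Pi.single_apply]
    have step1 : ∀ x : Fin n × Fin n,
        ((w x.1 * v x.2) • τ x.1 x.2) e = (w x.1 * v x.2) * τ x.1 x.2 e := by
      intro x; simp [Pi.smul_apply, smul_eq_mul]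
    have inner : ∀ k, (∑ l, (w k * v l) * (τ k l e)) = w k * u k * v e := by
      intro k
      by_cases he : e = k
      · subst he
        calc ∑ l, (w e * v l) * (τ e l e)
            = ∑ l, ((if e = l then w e * v l * u e else 0) - w e * (v l * u l)) := by
              refine Finset.sum_congr rfl fun l _ => ?_
              rw [hτe, if_pos rfl]
              by_cases h : e = l
              · rw [if_pos h, if_pos h]; ring
              · rw [if_neg h, if_neg h]; ring
          _ = (∑ l, (if e = l then w e * v l * u e else 0)) - ∑ l, w e * (v l * u l) :=
              Finset.sum_sub_distrib _ _
          _ = w e * v e * u e - w e * (v ⬝ᵥ u) := by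
              rw [Finset.sum_ite_eq]
              simp [dotProduct, Finset.mul_sum]
          _ = w e * u e * v e := by rw [hvu]; ring
      · calc ∑ l, (w k * v l) * (τ k l e)
            = ∑ l, (if e = l then w k * v l * u k else 0) := by
              refine Finset.sum_congr rfl fun l _ => ?_
              rw [hτe, if_neg he]
              by_cases h : e = l
              · rw [if_pos h, if_pos h]; ring
              · rw [if_neg h, if_neg h]; ring
          _ = w k * v e * u k := by rw [Finset.sum_ite_eq]; simp
          _ = w k * u k * v e := by ring
    calc ∑ x : Fin n × Fin n, ((w x.1 * v x.2) • τ x.1 x.2) e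
        = ∑ x : Fin n × Fin n, (w x.1 * v x.2) * τ x.1 x.2 e :=
          Finset.sum_congr rfl fun x _ => step1 x
      _ = ∑ k, ∑ l, (w k * v l) * τ k l e := by
          rw [← Finset.univ_product_univ, Finset.sum_product]
      _ = ∑ k, w k * u k * v e := Finset.sum_congr rfl fun k _ => inner k
      _ = (w ⬝ᵥ u) * v e := by rw [dotProduct, Finset.sum_mul]
      _ = d * v e := by rw [hwu]
      _ = (d • v) e := by simp [Pi.smul_apply, smul_eq_mul]
  rwa [hsum] at hmain

end Prop54x

namespace Prop54x
open Matrix Prop54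

variable {n : ℕ} {A : Type*} [CommRing A]

def elemSL (i j : Fin n) (hij : i ≠ j) (a : A) : Matrix.SpecialLinearGroup (Fin n) A :=
  ⟨Matrix.transvection i j a, Matrix.det_transvection_of_ne i j hij a⟩

theorem mat_mul_vmv (D : Matrix (Fin n) (Fin n) A) (a b : Fin n → A) :
    D * vecMulVec a b = vecMulVec (D *ᵥ a) b := by
  ext i j
  rw [Matrix.mul_apply, vecMulVec_apply, Matrix.mulVec, dotProduct, Finset.sum_mul]
  exact Finset.sum_congr rfl fun k _ => by rw [vecMulVec_apply]; ring

theorem vmv_mul_mat (D : Matrix (Fin n) (Fin n) A) (a b : Fin n → A) :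
    vecMulVec a b * D = vecMulVec a (b ᵥ* D) := by
  ext i j
  rw [Matrix.mul_apply, vecMulVec_apply, Matrix.vecMul, dotProduct, Finset.mul_sum]
  exact Finset.sum_congr rfl fun k _ => by rw [vecMulVec_apply]; ring

/-- Main application: `1 + q²s·d²·e_ij` belongs to `H` under hypothesis (a). -/
theorem elem_mem_of_h (hn : 3 ≤ n) (qx : A) (D : Matrix (Fin n) (Fin n) A)
    (H : Subgroup (Matrix.SpecialLinearGroup (Fin n) A))
    (h1 : ∀ M : Matrix.SpecialLinearGroup (Fin n) A,
      (∃ N ∈ Fn n A (Ideal.span {qx}),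
        D * (M : Matrix (Fin n) (Fin n) A) = (N : Matrix (Fin n) (Fin n) A) * D) → M ∈ H)
    (i j : Fin n) (hij : i ≠ j) (s : A) :
    elemSL i j hij (qx * qx * s * (D.det * D.det)) ∈ H := by
  have hadj := Matrix.adjugate_mul D
  set d := D.det with hd
  set u : Fin n → A := fun p => D p i with hu
  set v : Fin n → A := fun p => D.adjugate j p with hv
  set w : Fin n → A := fun p => D.adjugate i p with hw
  have hwu : w ⬝ᵥ u = d := by
    have h' : w ⬝ᵥ u = (D.adjugate * D) i i := by
      rw [dotProduct, Matrix.mul_apply]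
    rw [h', hadj]
    simp [Matrix.smul_apply, Matrix.one_apply]
  have hvu : v ⬝ᵥ u = 0 := by
    have h' : v ⬝ᵥ u = (D.adjugate * D) j i := by
      rw [dotProduct, Matrix.mul_apply]
    rw [h', hadj]
    simp [Matrix.smul_apply, Matrix.one_apply, hij.symm]
  obtain ⟨N, hN, hNc⟩ := IsF.main hn qx u v w d s hwu hvu
  refine h1 _ ⟨N, hN, ?_⟩
  rw [hNc]
  show D * (Matrix.transvection i j (qx * qx * s * (d * d))) = _
  rw [Matrix.transvection, mul_add, mul_one, add_mul, one_mul]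
  congr 1
  have hstd : Matrix.single i j (qx * qx * s * (d * d))
      = vecMulVec (Pi.single i (1 : A)) (Pi.single j (qx * qx * s * (d * d))) := by
    rw [vmv_single_single, one_mul]
  rw [hstd, mat_mul_vmv, vmv_mul_mat]
  have hcol : D *ᵥ Pi.single i (1 : A) = u := by
    rw [Matrix.mulVec_single]
    funext p; simp [hu]
  have hrow : (d • v) ᵥ* D = Pi.single j (d * d) := by
    funext r
    have h1' : ((d • v) ᵥ* D) r = d * ((v ᵥ* D) r) := by
      simp [Matrix.vecMul, smul_dotProduct, smul_eq_mul]
    have h2' : (v ᵥ* D) r = (D.adjugate * D) j r := by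
      rw [Matrix.vecMul, dotProduct, Matrix.mul_apply]
    rw [h1', h2', hadj]
    rcases eq_or_ne r j with hr | hr
    · subst hr; simp [Matrix.smul_apply, Matrix.one_apply]
    · simp [Matrix.smul_apply, Matrix.one_apply, Ne.symm hr, Pi.single_eq_of_ne hr]
  rw [hcol, hrow]
  ext p r
  rw [vecMulVec_apply, vecMulVec_apply]
  rcases eq_or_ne r j with hr | hr
  · subst hr
    simp only [Pi.single_eq_same, Pi.smul_apply, smul_eq_mul]
    ring
  · simp [Pi.single_eq_of_ne hr]

end Prop54x

/-- **Proposition 5.4 of the paper.** Let `A` be a Dedekind domain, `n ≥ 3`, and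
`q, q' ∈ A` nonzero elements generating proper comaximal principal ideals
`𝔮 = qA`, `𝔮' = q'A`. Let `D, D'` be matrices over `A` whose determinants divide
powers of `q` and `q'` respectively. If a subgroup `H ≤ SL_n(A)` contains every
`M ∈ SL_n(A)` with `D·M = N·D` for some `N ∈ F_n(A,𝔮)`, as well as every
`M ∈ SL_n(A)` with `D'·M = N'·D'` for some `N' ∈ F_n(A,𝔮')`, then `H ⊇ E_n(A)`. -/
theorem en_le_of_conj_fn (A : Type*) [CommRing A] [IsDedekindDomain A]
    (n : ℕ) (hn : 3 ≤ n)
    (q q' : A) (hq0 : q ≠ 0) (hq'0 : q' ≠ 0)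
    (hq : Ideal.span {q} ≠ ⊤) (hq' : Ideal.span {q'} ≠ ⊤)
    (hco : Ideal.span {q} + Ideal.span {q'} = ⊤)
    (D D' : Matrix (Fin n) (Fin n) A)
    (hD : ∃ e : ℕ, D.det ∣ q ^ e) (hD' : ∃ e : ℕ, D'.det ∣ q' ^ e)
    (H : Subgroup (Matrix.SpecialLinearGroup (Fin n) A))
    (h1 : ∀ M : Matrix.SpecialLinearGroup (Fin n) A,
      (∃ N ∈ Fn n A (Ideal.span {q}),
        D * (M : Matrix (Fin n) (Fin n) A) = (N : Matrix (Fin n) (Fin n) A) * D) →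
      M ∈ H)
    (h2 : ∀ M : Matrix.SpecialLinearGroup (Fin n) A,
      (∃ N' ∈ Fn n A (Ideal.span {q'}),
        D' * (M : Matrix (Fin n) (Fin n) A) = (N' : Matrix (Fin n) (Fin n) A) * D') →
      M ∈ H) :
    En n A ≤ H := by

  rw [En, Subgroup.closure_le]
  rintro g ⟨i, j, hij, a, -, hg⟩
  obtain ⟨e1, r1, hr1⟩ : ∃ e r, q ^ e = D.det * r := by
    obtain ⟨e, hdvd⟩ := hD; obtain ⟨r, hr⟩ := hdvd; exact ⟨e, r, hr⟩
  obtain ⟨e2, r2, hr2⟩ : ∃ e r, q' ^ e = D'.det * r := by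
    obtain ⟨e, hdvd⟩ := hD'; obtain ⟨r, hr⟩ := hdvd; exact ⟨e, r, hr⟩
  have hcop : IsCoprime q q' := by
    rw [← Ideal.isCoprime_span_singleton_iff, Ideal.isCoprime_iff_add, Ideal.one_eq_top]
    exact hco
  obtain ⟨α, β, hαβ⟩ := hcop.pow (m := 2 * e1 + 2) (n := 2 * e2 + 2)
  set d := D.det with hd
  set d' := D'.det with hd'
  set s1 := a * α * (r1 * r1) with hs1
  set s2 := a * β * (r2 * r2) with hs2
  have hM1 := Prop54x.elem_mem_of_h hn q D H h1 i j hij s1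
  have hM2 := Prop54x.elem_mem_of_h hn q' D' H h2 i j hij s2
  have hx : q * q * s1 * (d * d) + q' * q' * s2 * (d' * d') = a := by
    have e1' : q ^ (2 * e1 + 2) = q * q * (q ^ e1 * q ^ e1) := by ring
    have e2' : q' ^ (2 * e2 + 2) = q' * q' * (q' ^ e2 * q' ^ e2) := by ring
    have := hαβ
    calc q * q * s1 * (d * d) + q' * q' * s2 * (d' * d')
        = a * (α * (q * q * ((d * r1) * (d * r1))) + β * (q' * q' * ((d' * r2) * (d' * r2)))) := by
          rw [hs1, hs2]; ring
      _ = a * (α * q ^ (2 * e1 + 2) + β * q' ^ (2 * e2 + 2)) := by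
          rw [e1', e2', hr1, hr2]
      _ = a := by rw [hαβ, mul_one]
  have hgprod : g =
      Prop54x.elemSL i j hij (q * q * s1 * (d * d)) * Prop54x.elemSL i j hij (q' * q' * s2 * (d' * d')) := by
    apply Subtype.coe_injective
    show (g : Matrix (Fin n) (Fin n) A) =
      Matrix.transvection i j (q * q * s1 * (d * d)) *
        Matrix.transvection i j (q' * q' * s2 * (d' * d'))
    rw [hg, Matrix.transvection, Matrix.transvection]
    have hzero : Matrix.single i j (q * q * s1 * (d * d)) *
        Matrix.single i j (q' * q' * s2 * (d' * d')) = 0 :=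
      Matrix.single_mul_single_of_ne (h := hij.symm) ..
    have hexp : ((1 : Matrix (Fin n) (Fin n) A) + Matrix.single i j (q * q * s1 * (d * d))) *
        (1 + Matrix.single i j (q' * q' * s2 * (d' * d')))
        = 1 + (Matrix.single i j (q * q * s1 * (d * d))
            + Matrix.single i j (q' * q' * s2 * (d' * d')))
          + Matrix.single i j (q * q * s1 * (d * d)) *
            Matrix.single i j (q' * q' * s2 * (d' * d')) := by
      noncomm_ring
    rw [hexp, hzero, add_zero, ← Matrix.single_add, hx]
  rw [hgprod]
  exact H.mul_mem hM1 hM2
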